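/- Behrends' quantitative Rosenthal theorem: let (x_n) be a bounded sequence in a real Banach space with δ̃(x_n) = inf over subsequences of δ > 0. Then for every η > 0 there is a subsequence (x_{n_k}) with ε_J(x_{n_k}) > δ̃(x_n)/2 − η; in particular (x_n) has a subsequence equivalent to the ℓ¹ basis. -/

import Mathlib

open Filter Topology

variable {X : Type*} [NormedAddCommGroup X] [NormedSpace ℝ X]

/-- James constant of a bounded sequence. -/
noncomputable def epsJ (x : ℕ → X) : ℝ :=
  ⨆ m : ℕ, sInf {r : ℝ | ∃ α : ℕ →₀ ℝ, (∀ n < m, α n = 0) ∧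
    (∑ n ∈ α.support, |α n|) = 1 ∧ r = ‖∑ n ∈ α.support, α n • x n‖}

/-- Oscillation modulus with respect to a set of functionals. -/
noncomputable def deltaD (D : Set (X →L[ℝ] ℝ)) (x : ℕ → X) : ℝ :=
  sSup {r : ℝ | ∃ f ∈ D, r = Filter.limsup (fun n => f (x n)) Filter.atTop
    - Filter.liminf (fun n => f (x n)) Filter.atTop}

/-- Oscillation modulus with respect to the dual unit ball. -/
noncomputable def delta (x : ℕ → X) : ℝ := deltaD {f : X →L[ℝ] ℝ | ‖f‖ ≤ 1} x

/-- Hagler-Johnson modulus. -/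
noncomputable def deltaHJ (x : ℕ → X) : ℝ :=
  sSup {r : ℝ | ∃ f : X →L[ℝ] ℝ, ‖f‖ ≤ 1 ∧
    r = Filter.limsup (fun n => f (x n)) Filter.atTop}

/-- Sup of James constants over subsequences. -/
noncomputable def tildeEpsJ (x : ℕ → X) : ℝ :=
  sSup {r : ℝ | ∃ φ : ℕ → ℕ, StrictMono φ ∧ r = epsJ (x ∘ φ)}

/-- Inf of δ over subsequences. -/
noncomputable def tildeDelta (x : ℕ → X) : ℝ :=
  sInf {r : ℝ | ∃ φ : ℕ → ℕ, StrictMono φ ∧ r = delta (x ∘ φ)}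

/-- `B` is a boundary: a subset of the dual unit sphere on which every element
of `X` attains its norm. -/
def IsBoundary (B : Set (X →L[ℝ] ℝ)) : Prop :=
  (∀ b ∈ B, ‖b‖ = 1) ∧ ∀ x : X, ∃ b ∈ B, b x = ‖x‖

/-- `x` is equivalent to the canonical `ℓ¹` basis (lower estimate; the upper
estimate follows from boundedness). -/
def IsL1Seq (x : ℕ → X) : Prop :=
  ∃ c > (0:ℝ), ∀ α : ℕ →₀ ℝ,
    c * (∑ n ∈ α.support, |α n|) ≤ ‖∑ n ∈ α.support, α n • x n‖

/-- norm-bounded sequence -/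
def BoundedSeq (x : ℕ → X) : Prop := ∃ C : ℝ, ∀ n, ‖x n‖ ≤ C

/-- weakly Cauchy sequence -/
def WeaklyCauchy (x : ℕ → X) : Prop :=
  ∀ f : X →L[ℝ] ℝ, ∃ l : ℝ, Filter.Tendsto (fun n => f (x n)) Filter.atTop (nhds l)

/-- the topology `σ(X,B)` of pointwise convergence on `B` -/
def Btop (B : Set (X →L[ℝ] ℝ)) : TopologicalSpace X :=
  TopologicalSpace.induced (fun x : X => fun b : B => (b : X →L[ℝ] ℝ) x) Pi.topologicalSpace

/-- the weak topology `σ(X,X*)` -/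
noncomputable def weakTop (X : Type*) [NormedAddCommGroup X] [NormedSpace ℝ X] :
    TopologicalSpace X :=
  TopologicalSpace.induced (fun x : X => fun f : X →L[ℝ] ℝ => f x) Pi.topologicalSpace

def OscOn (x : ℕ → X) (a c : ℝ) (f : X →L[ℝ] ℝ) (M : Set ℕ) : Prop :=
  {n | n ∈ M ∧ a + c < f (x n)}.Infinite ∧ {n | n ∈ M ∧ f (x n) < a - c}.Infinite



lemma val_bound {x : ℕ → X} {C : ℝ} (hC : ∀ n, ‖x n‖ ≤ C) {f : X →L[ℝ] ℝ}
    (hf : ‖f‖ ≤ 1) (n : ℕ) : |f (x n)| ≤ C := by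
  calc |f (x n)| ≤ ‖f‖ * ‖x n‖ := f.le_opNorm (x n)
  _ ≤ 1 * C := by
      apply mul_le_mul hf (hC n) (norm_nonneg _) zero_le_one
  _ = C := one_mul C

lemma delta_zero_mem {x : ℕ → X} :
    (0:ℝ) ∈ {r : ℝ | ∃ f ∈ {f : X →L[ℝ] ℝ | ‖f‖ ≤ 1},
      r = Filter.limsup (fun n => f (x n)) Filter.atTop
        - Filter.liminf (fun n => f (x n)) Filter.atTop} := by
  refine ⟨0, by simp, ?_⟩
  simp [limsup_const, liminf_const]

lemma delta_nonneg' {x : ℕ → X} {C : ℝ} (hC : ∀ n, ‖x n‖ ≤ C) : 0 ≤ delta x := by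
  have h0 := delta_zero_mem (x := x)
  have : ∀ r ∈ {r : ℝ | ∃ f ∈ {f : X →L[ℝ] ℝ | ‖f‖ ≤ 1},
      r = Filter.limsup (fun n => f (x n)) Filter.atTop
        - Filter.liminf (fun n => f (x n)) Filter.atTop}, True := fun _ _ => trivial
  unfold delta deltaD
  apply Real.sSup_nonneg
  rintro r ⟨f, hf, rfl⟩
  have hb1 : IsBoundedUnder (· ≤ ·) atTop (fun n => f (x n)) :=
    isBoundedUnder_of ⟨C, fun k => (abs_le.mp (val_bound hC hf k)).2⟩
  have hb2 : IsBoundedUnder (· ≥ ·) atTop (fun n => f (x n)) :=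
    isBoundedUnder_of ⟨-C, fun k => (abs_le.mp (val_bound hC hf k)).1⟩
  have := liminf_le_limsup hb1 hb2
  linarith

lemma exists_osc_center {x : ℕ → X} {C : ℝ} {δ0 : ℝ} (hC : ∀ n, ‖x n‖ ≤ C)
    (hδ : ∀ φ : ℕ → ℕ, StrictMono φ → (δ0 : ℝ) ≤ delta (x ∘ φ))
    {M : Set ℕ} (hM : M.Infinite) {ε : ℝ} (hε : 0 < ε) :
    ∃ (f : X →L[ℝ] ℝ) (aa : ℝ), ‖f‖ ≤ 1 ∧ -C ≤ aa ∧ aa ≤ C ∧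
      OscOn x aa ((δ0 - ε)/2) f M := by
  classical
  have hM' : {n | n ∈ M}.Infinite := hM
  set φ : ℕ → ℕ := Nat.nth (· ∈ M) with hφdef
  have hφ : StrictMono φ := Nat.nth_strictMono hM'
  have hφM : ∀ k, φ k ∈ M := fun k => Nat.nth_mem_of_infinite hM' k
  have hd : δ0 ≤ delta (x ∘ φ) := hδ φ hφ
  have hCb : ∀ k, ‖(x ∘ φ) k‖ ≤ C := fun k => hC (φ k)
  have hSne : {r : ℝ | ∃ f ∈ {f : X →L[ℝ] ℝ | ‖f‖ ≤ 1},
      r = Filter.limsup (fun n => f ((x ∘ φ) n)) Filter.atTop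
        - Filter.liminf (fun n => f ((x ∘ φ) n)) Filter.atTop}.Nonempty :=
    ⟨0, delta_zero_mem (x := x ∘ φ)⟩
  have hlt : δ0 - ε < delta (x ∘ φ) := lt_of_lt_of_le (by linarith) hd
  unfold delta deltaD at hlt
  obtain ⟨r, hrS, hrgt⟩ := exists_lt_of_lt_csSup hSne hlt
  obtain ⟨f, hf1, hreq⟩ := hrS
  simp only [Set.mem_setOf_eq] at hf1
  set u : ℕ → ℝ := fun k => f ((x ∘ φ) k) with hu
  have hub : ∀ k, |u k| ≤ C := fun k => val_bound hCb hf1 k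
  have hb1 : IsBoundedUnder (· ≤ ·) atTop u :=
    isBoundedUnder_of ⟨C, fun k => (abs_le.mp (hub k)).2⟩
  have hb2 : IsBoundedUnder (· ≥ ·) atTop u :=
    isBoundedUnder_of ⟨-C, fun k => (abs_le.mp (hub k)).1⟩
  have hcob1 : IsCoboundedUnder (· ≤ ·) atTop u := hb2.isCobounded_le
  have hcob2 : IsCoboundedUnder (· ≥ ·) atTop u := hb1.isCobounded_ge
  set L := limsup u atTop with hL
  set l := liminf u atTop with hl
  have hLl : l ≤ L := liminf_le_limsup hb1 hb2
  have hLC : L ≤ C := limsup_le_of_le hcob1 (Eventually.of_forall (fun k => (abs_le.mp (hub k)).2))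
  have hlC : -C ≤ l := le_liminf_of_le hcob2 (Eventually.of_forall (fun k => (abs_le.mp (hub k)).1))
  have hrLl : r = L - l := hreq
  set aa := (L + l)/2 with haa
  have h1 : aa + (δ0 - ε)/2 < L := by rw [haa]; linarith
  have h2 : l < aa - (δ0 - ε)/2 := by rw [haa]; linarith
  have freq1 : ∃ᶠ k in atTop, aa + (δ0 - ε)/2 < u k := frequently_lt_of_lt_limsup hcob1 h1
  have freq2 : ∃ᶠ k in atTop, u k < aa - (δ0 - ε)/2 := frequently_lt_of_liminf_lt hcob2 h2
  have hinf1 : {k | aa + (δ0 - ε)/2 < u k}.Infinite :=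
    Nat.frequently_atTop_iff_infinite.mp freq1
  have hinf2 : {k | u k < aa - (δ0 - ε)/2}.Infinite :=
    Nat.frequently_atTop_iff_infinite.mp freq2
  refine ⟨f, aa, hf1, by linarith, by linarith, ?_, ?_⟩
  · refine (hinf1.image hφ.injective.injOn).mono ?_
    rintro n ⟨k, hk, rfl⟩
    exact ⟨hφM k, hk⟩
  · refine (hinf2.image hφ.injective.injOn).mono ?_
    rintro n ⟨k, hk, rfl⟩
    exact ⟨hφM k, hk⟩


def RealizeOn (x : ℕ → X) (a c : ℝ) (f : X →L[ℝ] ℝ) (F : Finset ℕ) (σ : ℕ → Bool) : Prop :=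
  ∀ i ∈ F, (σ i = true → a + c < f (x i)) ∧ (σ i = false → f (x i) < a - c)

def HGp (x : ℕ → X) (a c : ℝ) (F : Finset ℕ) (R : Set ℕ) : Prop :=
  ∀ (σ : ℕ → Bool) (M : Set ℕ), M ⊆ R → M.Infinite →
    ∃ f : X →L[ℝ] ℝ, ‖f‖ ≤ 1 ∧ RealizeOn x a c f F σ ∧ OscOn x a c f M


lemma OscOn.of_diff_finite {x : ℕ → X} {a c : ℝ} {f : X →L[ℝ] ℝ} {D R : Set ℕ}
    (h : OscOn x a c f D) (hfin : (D \ R).Finite) : OscOn x a c f R := by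
  constructor
  · refine (((h.1).diff hfin).mono ?_)
    rintro n ⟨⟨hnD, hval⟩, hnR⟩
    exact ⟨by by_contra hRc; exact hnR ⟨hnD, hRc⟩, hval⟩
  · refine (((h.2).diff hfin).mono ?_)
    rintro n ⟨⟨hnD, hval⟩, hnR⟩
    exact ⟨by by_contra hRc; exact hnR ⟨hnD, hRc⟩, hval⟩

lemma HGp.extend {x : ℕ → X} {a c : ℝ} {F : Finset ℕ} {R : Set ℕ}
    (hR : R.Infinite) (h : HGp x a c F R) (b : ℕ) :
    ∃ (n : ℕ) (R' : Set ℕ), b < n ∧ R'.Infinite ∧ R' ⊆ R ∧ HGp x a c (insert n F) R' := by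
  classical
  by_contra hcon
  push_neg at hcon
  have hcon' : ∀ (n : ℕ) (R' : Set ℕ), b < n → R'.Infinite → R' ⊆ R →
      ∃ (σ : ℕ → Bool) (M : Set ℕ), M ⊆ R' ∧ M.Infinite ∧
        ∀ f : X →L[ℝ] ℝ, ‖f‖ ≤ 1 → RealizeOn x a c f (insert n F) σ →
          ¬ OscOn x a c f M := by
    intro n R' h1 h2 h3
    have hng := hcon n R' h1 h2 h3
    unfold HGp at hng
    push_neg at hng
    obtain ⟨σ, M, hM1, hM2, hf⟩ := hng
    exact ⟨σ, M, hM1, hM2, hf⟩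
  -- one step of the chain
  have step : ∀ p : {q : ℕ × Set ℕ // q.2 ⊆ R ∧ q.2.Infinite},
      ∃ t : (ℕ × Set ℕ) × (ℕ → Bool),
        (t.1.2 ⊆ R ∧ t.1.2.Infinite) ∧
        t.1.1 ∈ p.1.2 ∧ p.1.1 < t.1.1 ∧ b < t.1.1 ∧ t.1.2 ⊆ p.1.2 ∧
        ∀ f : X →L[ℝ] ℝ, ‖f‖ ≤ 1 → RealizeOn x a c f (insert t.1.1 F) t.2 →
          ¬ OscOn x a c f t.1.2 := by
    rintro ⟨⟨m, S⟩, hS1, hS2⟩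
    have hne : (S \ Set.Iic (max b m)).Nonempty := (hS2.diff (Set.finite_Iic _)).nonempty
    obtain ⟨n, hnS, hn2⟩ := hne
    have hmax : max b m < n := by simpa using hn2
    have hbn : b < n := lt_of_le_of_lt (le_max_left _ _) hmax
    have hmn : m < n := lt_of_le_of_lt (le_max_right _ _) hmax
    obtain ⟨σ, M, hM1, hM2, hk⟩ := hcon' n S hbn hS2 hS1
    exact ⟨((n, M), σ), ⟨hM1.trans hS1, hM2⟩, hnS, hmn, hbn, hM1, hk⟩
  choose stp hstp0 hstp1 hstp2 hstp3 hstp4 hstp5 using step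
  let T := {q : ℕ × Set ℕ // q.2 ⊆ R ∧ q.2.Infinite}
  let ch : ℕ → T := fun k => Nat.rec ⟨(b, R), subset_rfl, hR⟩ (fun _ p => ⟨(stp p).1, hstp0 p⟩) k
  have hch : ∀ k, (ch (k+1)).1 = (stp (ch k)).1 := fun _ => rfl
  set N : ℕ → ℕ := fun k => (ch k).1.1 with hN
  set Rk : ℕ → Set ℕ := fun k => (ch k).1.2 with hRk
  set Sgk : ℕ → (ℕ → Bool) := fun k => (stp (ch k)).2 with hSgk
  have hNin : ∀ k, N (k+1) ∈ Rk k := fun k => hstp1 (ch k)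
  have hNlt : ∀ k, N k < N (k+1) := fun k => hstp2 (ch k)
  have hRsub : ∀ k, Rk (k+1) ⊆ Rk k := fun k => hstp4 (ch k)
  have hnoF : ∀ k, ∀ f : X →L[ℝ] ℝ, ‖f‖ ≤ 1 →
      RealizeOn x a c f (insert (N (k+1)) F) (Sgk k) → ¬ OscOn x a c f (Rk (k+1)) :=
    fun k => hstp5 (ch k)
  have hNmono : StrictMono N := strictMono_nat_of_lt_succ hNlt
  have hRanti : ∀ j k, j ≤ k → Rk k ⊆ Rk j := by
    intro j k hjk
    induction k with
    | zero => rw [Nat.le_zero.mp hjk]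
    | succ k ih =>
      rcases Nat.lt_or_ge j (k+1) with h'|h'
      · exact (hRsub k).trans (ih (Nat.lt_succ_iff.mp h'))
      · rw [Nat.le_antisymm hjk h']
  have htail : ∀ j k, j ≤ k → N (k+1) ∈ Rk j := fun j k hjk => hRanti j k hjk (hNin k)
  -- pigeonhole on the restricted patterns
  let g : ℕ → ((F → Bool) × Bool) :=
    fun k => ((fun i : F => Sgk k i.1), Sgk k (N (k+1)))
  obtain ⟨y, hy⟩ := Finite.exists_infinite_fiber g
  have hJinf : (g ⁻¹' {y} : Set ℕ).Infinite := Set.infinite_coe_iff.mp hy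
  set D : Set ℕ := (fun k => N (k+1)) '' (g ⁻¹' {y}) with hD
  have hsuccmono : StrictMono (fun k => N (k+1)) := fun p q hpq => hNmono (Nat.succ_lt_succ hpq)
  have hDinf : D.Infinite := hJinf.image (hsuccmono.injective.injOn)
  have hDR : D ⊆ R := by
    rintro n ⟨k, _, rfl⟩
    exact (ch k).2.1 (hNin k)
  set σfull : ℕ → Bool := fun i => if hi : i ∈ F then y.1 ⟨i, hi⟩ else y.2 with hσfull
  obtain ⟨f, hf1, hreal, hosc⟩ := h σfull D hDR hDinf
  have hDfin : ∀ k, (D \ Rk (k+1)).Finite := by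
    intro k
    apply ((Set.finite_Iic k).image (fun j => N (j+1))).subset
    rintro n ⟨⟨j, hjJ, rfl⟩, hnot⟩
    refine ⟨j, ?_, rfl⟩
    simp only [Set.mem_Iic]
    by_contra hjk
    exact hnot (hRanti (k+1) j (by omega) (hNin j))
  have key : ∀ (k : ℕ), g k = y → (a + c < f (x (N (k+1))) ∧ y.2 = true) ∨
      (f (x (N (k+1))) < a - c ∧ y.2 = false) → False := by
    intro k hgk hside
    have hσF : ∀ i, (hi : i ∈ F) → Sgk k i = y.1 ⟨i, hi⟩ := by
      intro i hi
      have := congrArg Prod.fst hgk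
      exact congrFun this ⟨i, hi⟩
    have hσn : Sgk k (N (k+1)) = y.2 := congrArg Prod.snd hgk
    apply hnoF k f hf1
    · intro i hi
      rcases Finset.mem_insert.mp hi with h'|h'
      · subst h'
        constructor
        · intro htrue
          rcases hside with ⟨hval, _⟩|⟨_, hfalse⟩
          · exact hval
          · rw [hσn, hfalse] at htrue; cases htrue
        · intro hfalse'
          rcases hside with ⟨_, htrue⟩|⟨hval, _⟩
          · rw [hσn, htrue] at hfalse'; cases hfalse'
          · exact hval
      · have hcond := hreal i h'
        have : σfull i = Sgk k i := by
          rw [hσfull]; dsimp only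
          rw [dif_pos h', hσF i h']
        rw [this] at hcond
        exact hcond
    · exact hosc.of_diff_finite (hDfin k)
  cases hy2 : y.2 with
  | true =>
    obtain ⟨nstar, hnD, hval⟩ := hosc.1.nonempty
    obtain ⟨k, hkJ, hEq⟩ := hnD
    have hgk : g k = y := hkJ
    rw [← hEq] at hval
    exact key k hgk (Or.inl ⟨hval, hy2⟩)
  | false =>
    obtain ⟨nstar, hnD, hval⟩ := hosc.2.nonempty
    obtain ⟨k, hkJ, hEq⟩ := hnD
    have hgk : g k = y := hkJ
    rw [← hEq] at hval
    exact key k hgk (Or.inr ⟨hval, hy2⟩)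

lemma OscOn.weaken {x : ℕ → X} {a c a' c' : ℝ} {f : X →L[ℝ] ℝ} {M : Set ℕ}
    (h : OscOn x a c f M) (h1 : a' + c' ≤ a + c) (h2 : a - c ≤ a' - c') :
    OscOn x a' c' f M :=
  ⟨h.1.mono (fun n hn => ⟨hn.1, lt_of_le_of_lt h1 hn.2⟩),
   h.2.mono (fun n hn => ⟨hn.1, lt_of_lt_of_le hn.2 h2⟩)⟩

lemma OscOn.monoSet {x : ℕ → X} {a c : ℝ} {f : X →L[ℝ] ℝ} {M M' : Set ℕ}
    (h : OscOn x a c f M) (hMM : M ⊆ M') : OscOn x a c f M' :=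
  ⟨h.1.mono (fun n hn => ⟨hMM hn.1, hn.2⟩), h.2.mono (fun n hn => ⟨hMM hn.1, hn.2⟩)⟩

lemma exists_stable_center {x : ℕ → X} {C : ℝ} {δ0 ε : ℝ} (hC : ∀ n, ‖x n‖ ≤ C)
    (hC0 : 0 ≤ C)
    (hδ : ∀ φ : ℕ → ℕ, StrictMono φ → δ0 ≤ delta (x ∘ φ)) (hε : 0 < ε) :
    ∃ (Z : Set ℕ) (astar : ℝ), Z.Infinite ∧
      ∀ M, M ⊆ Z → M.Infinite →
        ∃ f : X →L[ℝ] ℝ, ‖f‖ ≤ 1 ∧ OscOn x astar ((δ0 - ε)/2 - ε) f M := by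
  classical
  set c' : ℝ := (δ0 - ε)/2 - ε with hc'
  set N : ℕ := Nat.floor (2*C/ε) + 1 with hN
  set P : Set ℕ → ℕ → Prop :=
    fun M i => ∃ f : X →L[ℝ] ℝ, ‖f‖ ≤ 1 ∧ OscOn x (-C + i*ε) c' f M with hP
  have Pmono : ∀ {M M' : Set ℕ} {i}, P M i → M ⊆ M' → P M' i := by
    rintro M M' i ⟨f, hf1, hf2⟩ hs
    exact ⟨f, hf1, hf2.monoSet hs⟩
  have L1 : ∀ M : Set ℕ, M.Infinite → ∃ i < N, P M i := by
    intro M hM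
    obtain ⟨f, aa, hf1, haa1, haa2, hosc⟩ := exists_osc_center hC hδ hM hε
    set t : ℝ := (aa + C)/ε with ht
    have ht0 : 0 ≤ t := div_nonneg (by linarith) hε.le
    set i : ℕ := Nat.floor t with hi
    have hile : (i:ℝ) ≤ t := Nat.floor_le ht0
    have hilt : t < (i:ℝ) + 1 := Nat.lt_floor_add_one t
    have hg1 : -C + i*ε ≤ aa := by
      have : (i:ℝ)*ε ≤ t*ε := mul_le_mul_of_nonneg_right hile hε.le
      rw [ht] at this
      rw [div_mul_cancel₀ _ hε.ne'] at this
      linarith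
    have hg2 : aa ≤ -C + i*ε + ε := by
      have : t*ε < ((i:ℝ)+1)*ε := mul_lt_mul_of_pos_right hilt hε
      rw [ht, div_mul_cancel₀ _ hε.ne'] at this
      nlinarith
    have hiN : i < N := by
      have h1 : t ≤ 2*C/ε := by
        rw [ht]
        gcongr
        linarith
      have h2 : i ≤ Nat.floor (2*C/ε) := by
        rw [hi]; exact Nat.floor_mono h1
      omega
    refine ⟨i, hiN, f, hf1, hosc.weaken ?_ ?_⟩
    · rw [hc']; linarith
    · rw [hc']; linarith
  have elim : ∀ j : ℕ, ∃ M : Set ℕ, M.Infinite ∧ ∀ i < j,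
      (∀ M', M' ⊆ M → M'.Infinite → ¬ P M' i) ∨
      (∀ M', M' ⊆ M → M'.Infinite → P M' i) := by
    intro j; induction j with
    | zero => exact ⟨Set.univ, Set.infinite_univ, by omega⟩
    | succ j ih =>
      obtain ⟨M, hMinf, hM⟩ := ih
      by_cases hcase : ∃ M', M' ⊆ M ∧ M'.Infinite ∧
          ∀ M'', M'' ⊆ M' → M''.Infinite → ¬ P M'' j
      · obtain ⟨M', h1, h2, h3⟩ := hcase
        refine ⟨M', h2, ?_⟩
        intro i hi
        rcases Nat.lt_or_ge i j with h'|h'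
        · rcases hM i h' with hl|hr
          · exact Or.inl (fun M'' hs hinf => hl M'' (hs.trans h1) hinf)
          · exact Or.inr (fun M'' hs hinf => hr M'' (hs.trans h1) hinf)
        · have hij : i = j := by omega
          subst hij
          exact Or.inl h3
      · push_neg at hcase
        refine ⟨M, hMinf, ?_⟩
        intro i hi
        rcases Nat.lt_or_ge i j with h'|h'
        · exact hM i h'
        · have hij : i = j := by omega
          subst hij
          refine Or.inr ?_
          intro M' hs hinf
          obtain ⟨M'', hs2, hinf2, hPj⟩ := hcase M' hs hinf
          exact Pmono hPj hs2
  obtain ⟨M, hMinf, hM⟩ := elim N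
  obtain ⟨i, hiN, hPi⟩ := L1 M hMinf
  rcases hM i hiN with hl|hr
  · exact absurd hPi (hl M subset_rfl hMinf)
  · exact ⟨M, -C + i*ε, hMinf, fun M' hs hinf => hr M' hs hinf⟩

lemma l1_of_indep {w : ℕ → X} {a c : ℝ}
    (h : ∀ (J : Finset ℕ) (σ : ℕ → Bool), ∃ f : X →L[ℝ] ℝ, ‖f‖ ≤ 1 ∧
      ∀ j ∈ J, (σ j = true → a + c < f (w j)) ∧ (σ j = false → f (w j) < a - c)) :
    ∀ α : ℕ →₀ ℝ, c * (∑ n ∈ α.support, |α n|) ≤ ‖∑ n ∈ α.support, α n • w n‖ := by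
  classical
  intro α
  set J := α.support with hJ
  set u := ∑ n ∈ J, α n • w n with hu
  set S := ∑ n ∈ J, α n with hS
  set T := ∑ n ∈ J, |α n| with hT
  obtain ⟨f, hf1, hf⟩ := h J (fun j => decide (0 < α j))
  obtain ⟨g, hg1, hg⟩ := h J (fun j => decide (α j < 0))
  have hfu : f u = ∑ n ∈ J, α n * f (w n) := by
    rw [hu, map_sum]
    refine Finset.sum_congr rfl (fun n _ => ?_)
    simp [smul_eq_mul]
  have hgu : g u = ∑ n ∈ J, α n * g (w n) := by
    rw [hu, map_sum]
    refine Finset.sum_congr rfl (fun n _ => ?_)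
    simp [smul_eq_mul]
  have hflb : a * S + c * T ≤ f u := by
    rw [hfu, hS, hT, Finset.mul_sum, Finset.mul_sum, ← Finset.sum_add_distrib]
    refine Finset.sum_le_sum (fun n hn => ?_)
    have hne : α n ≠ 0 := Finsupp.mem_support_iff.mp hn
    rcases lt_or_gt_of_ne hne with hneg | hpos
    · have := (hf n hn).2 (by simp [hneg.not_gt])
      have habs : |α n| = -(α n) := abs_of_neg hneg
      have h2 : α n * (a - c) ≤ α n * f (w n) := mul_le_mul_of_nonpos_left this.le hneg.le
      rw [habs]; linarith
    · have := (hf n hn).1 (by simp [hpos])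
      have habs : |α n| = α n := abs_of_pos hpos
      have h2 : α n * (a + c) ≤ α n * f (w n) := mul_le_mul_of_nonneg_left this.le hpos.le
      rw [habs]; linarith
  have hgub : g u ≤ a * S - c * T := by
    rw [hgu, hS, hT, Finset.mul_sum, Finset.mul_sum, ← Finset.sum_sub_distrib]
    refine Finset.sum_le_sum (fun n hn => ?_)
    have hne : α n ≠ 0 := Finsupp.mem_support_iff.mp hn
    rcases lt_or_gt_of_ne hne with hneg | hpos
    · have := (hg n hn).1 (by simp [hneg])
      have habs : |α n| = -(α n) := abs_of_neg hneg
      have h2 : α n * g (w n) ≤ α n * (a + c) := mul_le_mul_of_nonpos_left this.le hneg.le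
      rw [habs]; linarith
    · have := (hg n hn).2 (by simp [hpos.not_gt, hpos.le])
      have habs : |α n| = α n := abs_of_pos hpos
      have h2 : α n * g (w n) ≤ α n * (a - c) := mul_le_mul_of_nonneg_left this.le hpos.le
      rw [habs]; linarith
  have hfn : f u ≤ ‖u‖ := by
    calc f u ≤ |f u| := le_abs_self _
    _ ≤ ‖f‖ * ‖u‖ := f.le_opNorm u
    _ ≤ 1 * ‖u‖ := by gcongr
    _ = ‖u‖ := one_mul _
  have hgn : -(g u) ≤ ‖u‖ := by
    calc -(g u) ≤ |g u| := neg_le_abs _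
    _ ≤ ‖g‖ * ‖u‖ := g.le_opNorm u
    _ ≤ 1 * ‖u‖ := by gcongr
    _ = ‖u‖ := one_mul _
  linarith

lemma exists_indep_seq {x : ℕ → X} {a c : ℝ} {Z : Set ℕ}
    (hZ : Z.Infinite) (h : HGp x a c ∅ Z) :
    ∃ e : ℕ → ℕ, StrictMono e ∧ ∀ (J : Finset ℕ) (σ : ℕ → Bool),
      ∃ f : X →L[ℝ] ℝ, ‖f‖ ≤ 1 ∧
        ∀ j ∈ J, (σ j = true → a + c < f (x (e j))) ∧ (σ j = false → f (x (e j)) < a - c) := by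
  classical
  have step : ∀ p : {p : Finset ℕ × Set ℕ // p.2.Infinite ∧ HGp x a c p.1 p.2},
      ∃ q : ℕ × {p : Finset ℕ × Set ℕ // p.2.Infinite ∧ HGp x a c p.1 p.2},
        p.1.1.sup id < q.1 ∧ q.2.1.1 = insert q.1 p.1.1 ∧ q.2.1.2 ⊆ p.1.2 := by
    rintro ⟨⟨F, R⟩, hinf, hHG⟩
    obtain ⟨n, R', hn, hR'inf, hsub, hHG'⟩ := hHG.extend hinf (F.sup id)
    exact ⟨(n, ⟨(insert n F, R'), hR'inf, hHG'⟩), hn, rfl, hsub⟩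
  choose stp h1 h2 _h3 using step
  let ch : ℕ → {p : Finset ℕ × Set ℕ // p.2.Infinite ∧ HGp x a c p.1 p.2} :=
    fun k => Nat.rec ⟨(∅, Z), hZ, h⟩ (fun _ p => (stp p).2) k
  have hch : ∀ k, ch (k+1) = (stp (ch k)).2 := fun _ => rfl
  set e : ℕ → ℕ := fun k => (stp (ch k)).1 with he
  have hF : ∀ k, (ch k).1.1 = Finset.image e (Finset.range k) := by
    intro k; induction k with
    | zero => simp [ch]
    | succ k ih =>
      rw [hch k, h2 (ch k), ih, Finset.range_add_one, Finset.image_insert]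
  have hmono : StrictMono e := by
    apply strictMono_nat_of_lt_succ
    intro k
    have hlt := h1 (ch (k+1))
    have hmem : e k ∈ (ch (k+1)).1.1 := by
      rw [hch k, h2 (ch k)]; exact Finset.mem_insert_self _ _
    have : e k ≤ (ch (k+1)).1.1.sup id := Finset.le_sup (f := id) hmem
    exact lt_of_le_of_lt this hlt
  refine ⟨e, hmono, ?_⟩
  intro J σ
  set k := J.sup id + 1 with hk
  set σ' : ℕ → Bool := fun i => if hi : ∃ j, j ∈ J ∧ e j = i then σ hi.choose else true with hσ'
  obtain ⟨f, hf1, hreal, _⟩ := (ch k).2.2 σ' (ch k).1.2 subset_rfl (ch k).2.1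
  refine ⟨f, hf1, ?_⟩
  intro j hj
  have hjk : j ∈ Finset.range k := Finset.mem_range.mpr (Nat.lt_succ_of_le (Finset.le_sup (f := id) hj))
  have hmem : e j ∈ (ch k).1.1 := by
    rw [hF k]; exact Finset.mem_image.mpr ⟨j, hjk, rfl⟩
  have hex : ∃ j', j' ∈ J ∧ e j' = e j := ⟨j, hj, rfl⟩
  have hσeq : σ' (e j) = σ j := by
    rw [hσ']; dsimp only
    rw [dif_pos hex]
    have hspec := hex.choose_spec
    have : hex.choose = j := hmono.injective hspec.2
    rw [this]
  have := hreal (e j) hmem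
  rw [hσeq] at this
  exact this

lemma delta_subseq_ge {x : ℕ → X} {C : ℝ} (hC : ∀ n, ‖x n‖ ≤ C)
    {φ : ℕ → ℕ} (hφ : StrictMono φ) : tildeDelta x ≤ delta (x ∘ φ) := by
  apply csInf_le
  · refine ⟨0, ?_⟩
    rintro r ⟨ψ, hψ, rfl⟩
    exact delta_nonneg' (fun k => hC (ψ k))
  · exact ⟨φ, hφ, rfl⟩

lemma epsJ_ge {w : ℕ → X} {C c : ℝ} (hC : ∀ n, ‖w n‖ ≤ C)
    (h : ∀ α : ℕ →₀ ℝ, c * (∑ n ∈ α.support, |α n|) ≤ ‖∑ n ∈ α.support, α n • w n‖) :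
    c ≤ epsJ w := by
  classical
  set Sm : ℕ → Set ℝ := fun m => {r : ℝ | ∃ α : ℕ →₀ ℝ, (∀ n < m, α n = 0) ∧
    (∑ n ∈ α.support, |α n|) = 1 ∧ r = ‖∑ n ∈ α.support, α n • w n‖} with hSm
  have hmem : ∀ m, ‖w m‖ ∈ Sm m := by
    intro m
    refine ⟨Finsupp.single m 1, ?_, ?_, ?_⟩
    · intro n hn
      rw [Finsupp.single_apply, if_neg (by omega)]
    · rw [Finsupp.support_single_ne_zero m one_ne_zero]
      simp
    · rw [Finsupp.support_single_ne_zero m one_ne_zero]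
      simp
  have hlbset : ∀ m, ∀ r ∈ Sm m, c ≤ r := by
    intro m r hr
    obtain ⟨α, _, h2, rfl⟩ := hr
    have := h α
    rw [h2, mul_one] at this
    exact this
  have hub : BddAbove (Set.range fun m => sInf (Sm m)) := by
    refine ⟨C, ?_⟩
    rintro r ⟨m, rfl⟩
    exact le_trans (csInf_le ⟨c, hlbset m⟩ (hmem m)) (hC m)
  have : c ≤ sInf (Sm 0) := le_csInf ⟨_, hmem 0⟩ (hlbset 0)
  exact le_trans this (le_ciSup hub 0)

theorem stmt17 [CompleteSpace X] (x : ℕ → X) (hx : BoundedSeq x)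
    (hpos : 0 < tildeDelta x) :
    (∀ η > (0:ℝ), ∃ φ : ℕ → ℕ, StrictMono φ ∧
        tildeDelta x / 2 - η < epsJ (x ∘ φ)) ∧
      ∃ φ : ℕ → ℕ, StrictMono φ ∧ IsL1Seq (x ∘ φ) := by
  classical
  obtain ⟨C0, hC0⟩ := hx
  set C : ℝ := max C0 0 with hCdef
  have hC : ∀ n, ‖x n‖ ≤ C := fun n => le_trans (hC0 n) (le_max_left _ _)
  have hCpos : 0 ≤ C := le_max_right _ _
  set δ0 : ℝ := tildeDelta x with hδ0
  have hδsub : ∀ φ : ℕ → ℕ, StrictMono φ → δ0 ≤ delta (x ∘ φ) :=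
    fun φ hφ => delta_subseq_ge hC hφ
  have main : ∀ η : ℝ, 0 < η → η ≤ δ0/4 → ∃ φ : ℕ → ℕ, StrictMono φ ∧
      ∀ α : ℕ →₀ ℝ, (δ0/2 - (3/4)*η) * (∑ n ∈ α.support, |α n|) ≤
        ‖∑ n ∈ α.support, α n • (x ∘ φ) n‖ := by
    intro η hη hη4
    have hε : (0:ℝ) < η/2 := by linarith
    obtain ⟨Z, astar, hZinf, hZ⟩ := exists_stable_center hC hCpos hδsub hε
    set c' : ℝ := (δ0 - η/2)/2 - η/2 with hc'
    have hHG : HGp x astar c' ∅ Z := by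
      intro σ M hMsub hMinf
      obtain ⟨f, hf1, hosc⟩ := hZ M hMsub hMinf
      exact ⟨f, hf1, fun i hi => absurd hi (Finset.notMem_empty i), hosc⟩
    obtain ⟨e, he, hpat⟩ := exists_indep_seq hZinf hHG
    refine ⟨e, he, ?_⟩
    intro α
    have h2 := l1_of_indep (w := x ∘ e) (a := astar) (c := c') hpat α
    have hc'eq : c' = δ0/2 - (3/4)*η := by rw [hc']; ring
    rw [hc'eq] at h2
    exact h2
  constructor
  · intro η hη
    set η' : ℝ := min η (δ0/4) with hη'def
    have hη' : 0 < η' := lt_min hη (by linarith)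
    obtain ⟨φ, hφ, hest⟩ := main η' hη' (min_le_right _ _)
    refine ⟨φ, hφ, ?_⟩
    have h1 : δ0/2 - (3/4)*η' ≤ epsJ (x ∘ φ) :=
      epsJ_ge (fun n => hC (φ n)) hest
    have hle : η' ≤ η := min_le_left _ _
    have h2 : (3/4)*η' < η := by linarith
    have : δ0/2 - η < δ0/2 - (3/4)*η' := by linarith
    linarith
  · obtain ⟨φ, hφ, hest⟩ := main (δ0/4) (by linarith) le_rfl
    exact ⟨φ, hφ, δ0/2 - (3/4)*(δ0/4), by linarith, hest⟩
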